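/- arXiv:2301.03436 — 2 statements merged into one kernel-verified Lean document; each statement's English description precedes it below -/
import Mathlib

section
/- Let A and E be n×n real symmetric matrices with E positive definite, B an n×m real matrix, and C an m×m real symmetric positive definite matrix, and suppose the Schur complement S = A - B C⁻¹ Bᵀ is positive definite. If the block matrix [[A - E, B], [Bᵀ, C]] is positive semidefinite, then Tr(E⁻¹) ≥ Tr(S⁻¹) = Tr((A - B C⁻¹ Bᵀ)⁻¹). -/
open Matrix

private lemma psd_trace_nonneg {k : ℕ} {P : Matrix (Fin k) (Fin k) ℝ}
    (h : P.PosSemidef) : 0 ≤ P.trace := by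
  refine Finset.sum_nonneg fun i _ => ?_
  simpa using (posSemidef_iff_dotProduct_mulVec.mp h).2 (Pi.single i 1)

private lemma posDef_conj {k : ℕ} {P R : Matrix (Fin k) (Fin k) ℝ}
    (hP : P.PosDef) (hR : R.IsHermitian) (hdet : IsUnit R.det) :
    (R * P * R).PosDef := by
  have hRt : Rᵀ = R := hR
  refine posDef_iff_dotProduct_mulVec.mpr ⟨?_, fun x hx => ?_⟩
  · show (R * P * R)ᴴ = R * P * R
    rw [conjTranspose_mul, conjTranspose_mul, hR.eq, hP.1.eq, ← mul_assoc]
  · have hy : R *ᵥ x ≠ 0 := by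
      intro h0
      apply hx
      have h2 := congrArg (fun v => R⁻¹ *ᵥ v) h0
      simpa [mulVec_mulVec, nonsing_inv_mul R hdet] using h2
    have hpos := hP.dotProduct_mulVec_pos hy
    have key : star x ⬝ᵥ (R * P * R) *ᵥ x = star (R *ᵥ x) ⬝ᵥ P *ᵥ (R *ᵥ x) := by
      simp only [star_trivial]
      rw [mul_assoc, ← mulVec_mulVec, dotProduct_mulVec x R, ← mulVec_transpose, hRt,
        mulVec_mulVec]
    rw [key]; exact hpos

/-- For a positive definite `P`, there is a symmetric invertible `R` with
`R * R = P⁻¹` and `R * P * R = 1`. -/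
private lemma exists_sqrt_inv {k : ℕ} {P : Matrix (Fin k) (Fin k) ℝ} (hP : P.PosDef) :
    ∃ R : Matrix (Fin k) (Fin k) ℝ, R.IsHermitian ∧ R * R = P⁻¹ ∧ R * P * R = 1 ∧
      IsUnit R.det := by
  have hPinv : P⁻¹.PosDef := hP.inv
  have hdetP : IsUnit P.det := (Matrix.isUnit_iff_isUnit_det P).mp hP.isUnit
  obtain ⟨R, hRherm, hRR⟩ :
      ∃ R : Matrix (Fin k) (Fin k) ℝ, R.IsHermitian ∧ R * R = P⁻¹ :=
    open scoped MatrixOrder in ⟨CFC.sqrt P⁻¹, (CFC.sqrt_nonneg P⁻¹).posSemidef.1,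
      CFC.sqrt_mul_sqrt_self P⁻¹ hPinv.posSemidef.nonneg⟩
  have hdetR : IsUnit R.det := by
    have h2 : IsUnit (R.det * R.det) := by
      rw [← Matrix.det_mul, hRR]
      exact (Matrix.isUnit_iff_isUnit_det P⁻¹).mp hPinv.isUnit
    exact isUnit_of_mul_isUnit_left h2
  have h1 : R * (R * P) = 1 := by
    rw [← mul_assoc, hRR, Matrix.nonsing_inv_mul P hdetP]
  have h2 : (R * P) * R = 1 := mul_eq_one_comm.mp h1
  exact ⟨R, hRherm, hRR, by rw [mul_assoc] at h2; rw [mul_assoc]; exact h2, hdetR⟩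

/-- Loewner antitonicity of the inverse. -/
private lemma inv_sub_inv_psd {k : ℕ} {P Q : Matrix (Fin k) (Fin k) ℝ}
    (hP : P.PosDef) (hQ : Q.PosDef) (h : (P - Q).PosSemidef) :
    (Q⁻¹ - P⁻¹).PosSemidef := by
  obtain ⟨R, hRherm, hRR, hRQR, hRdet⟩ := exists_sqrt_inv hQ
  have hRconj : Rᴴ = R := hRherm
  have hMpd : (R * P * R).PosDef := posDef_conj hP hRherm hRdet
  have hM1 : (R * P * R - 1).PosSemidef := by
    have h3 := h.mul_mul_conjTranspose_same R
    rw [hRconj] at h3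
    have hexp : R * (P - Q) * R = R * P * R - 1 := by
      rw [Matrix.mul_sub, Matrix.sub_mul, hRQR]
    rwa [hexp] at h3
  obtain ⟨N, hNherm, hNN, hNMN, hNdet⟩ := exists_sqrt_inv hMpd
  have hNconj : Nᴴ = N := hNherm
  have h1M : (1 - (R * P * R)⁻¹).PosSemidef := by
    have h4 := hM1.mul_mul_conjTranspose_same N
    rw [hNconj] at h4
    have hexp : N * (R * P * R - 1) * N = 1 - (R * P * R)⁻¹ := by
      rw [Matrix.mul_sub, Matrix.sub_mul, hNMN, Matrix.mul_one, hNN]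
    rwa [hexp] at h4
  have hfinal : R * (1 - (R * P * R)⁻¹) * R = Q⁻¹ - P⁻¹ := by
    have hMinv : (R * P * R)⁻¹ = R⁻¹ * P⁻¹ * R⁻¹ := by
      rw [Matrix.mul_inv_rev, Matrix.mul_inv_rev, mul_assoc]
    rw [Matrix.mul_sub, Matrix.sub_mul, Matrix.mul_one, hRR, hMinv]
    congr 1
    have : R * (R⁻¹ * P⁻¹ * R⁻¹) * R = (R * R⁻¹) * P⁻¹ * (R⁻¹ * R) := by
      simp only [mul_assoc]
    rw [this, Matrix.mul_nonsing_inv _ hRdet, Matrix.nonsing_inv_mul _ hRdet,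
      one_mul, mul_one]
  have h5 := h1M.mul_mul_conjTranspose_same R
  rw [hRconj, hfinal] at h5
  exact h5

/-- Combination of the Schur-complement characterization of the LMI (18) with
Lemma 2 of the paper: if `E` is symmetric positive definite, `C` is symmetric
positive definite, the Schur complement `S = A - B C⁻¹ Bᵀ` is positive definite,
and the block matrix `[[A - E, B], [Bᵀ, C]]` is positive semidefinite, then
`Tr(E⁻¹) ≥ Tr((A - B C⁻¹ Bᵀ)⁻¹)`. -/
theorem trace_inv_ge_trace_schur_inv_of_LMI
    (n m : ℕ) (A E : Matrix (Fin n) (Fin n) ℝ) (B : Matrix (Fin n) (Fin m) ℝ)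
    (C : Matrix (Fin m) (Fin m) ℝ)
    (hA : A.IsSymm) (hE : E.IsSymm) (hC : C.IsSymm)
    (hEpd : E.PosDef) (hCpd : C.PosDef)
    (hS : (A - B * C⁻¹ * Bᵀ).PosDef)
    (hLMI : (Matrix.fromBlocks (A - E) B Bᵀ C).PosSemidef) :
    ((A - B * C⁻¹ * Bᵀ)⁻¹).trace ≤ (E⁻¹).trace := by
  haveI hCinv : Invertible C :=
    C.invertibleOfIsUnitDet ((Matrix.isUnit_iff_isUnit_det C).mp hCpd.isUnit)
  have hBt : Bᵀ = Bᴴ := (conjTranspose_eq_transpose_of_trivial B).symm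
  have hSchur : ((A - E) - B * C⁻¹ * Bᴴ).PosSemidef := by
    rw [← Matrix.PosDef.fromBlocks₂₂ (A - E) B hCpd]
    rw [← hBt]
    exact hLMI
  have hsub : ((A - B * C⁻¹ * Bᵀ) - E).PosSemidef := by
    have heq : (A - E) - B * C⁻¹ * Bᴴ = (A - B * C⁻¹ * Bᵀ) - E := by
      rw [← hBt, sub_right_comm]
    rwa [heq] at hSchur
  have hkey := inv_sub_inv_psd hS hEpd hsub
  have htr := psd_trace_nonneg hkey
  rw [Matrix.trace_sub] at htr
  linarith
end

section
/- Let N, M be positive integers and Θ a fixed N×N complex matrix. Let (Ω, μ) be a probability space carrying complex random variables {h̃_n : 1 ≤ n ≤ N} and {g̃_{n,m} : 1 ≤ n ≤ N, 1 ≤ m ≤ M} that together form a mutually independent family, each with zero mean E[·] = 0 and unit second moment E[|·|²] = 1, and each square-integrable. Writing h̃ for the random vector with entries h̃_n and G̃ for the random matrix with entries g̃_{n,m}, we have E[‖h̃ᴴ Θ G̃‖²] = M ‖Θ‖²_F. -/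
open MeasureTheory ProbabilityTheory Matrix
open scoped ENNReal

section Aux

variable {Ω' : Type*} {mΩ' : MeasurableSpace Ω'} {μ : Measure Ω'}

/-- The integral of a product of two independent integrable complex random variables
is the product of the integrals. -/
lemma aux_indepFun_integral_mul_complex {X Y : Ω' → ℂ}
    (h : IndepFun X Y μ) (hX : Integrable X μ) (hY : Integrable Y μ) :
    ∫ ω, X ω * Y ω ∂μ = (∫ ω, X ω ∂μ) * ∫ ω, Y ω ∂μ := by
  have hXY : Integrable (fun ω => X ω * Y ω) μ := h.integrable_mul hX hY
  have h_rr : IndepFun (fun ω => (X ω).re) (fun ω => (Y ω).re) μ :=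
    h.comp Complex.measurable_re Complex.measurable_re
  have h_ri : IndepFun (fun ω => (X ω).re) (fun ω => (Y ω).im) μ :=
    h.comp Complex.measurable_re Complex.measurable_im
  have h_ir : IndepFun (fun ω => (X ω).im) (fun ω => (Y ω).re) μ :=
    h.comp Complex.measurable_im Complex.measurable_re
  have h_ii : IndepFun (fun ω => (X ω).im) (fun ω => (Y ω).im) μ :=
    h.comp Complex.measurable_im Complex.measurable_im
  have hXr : Integrable (fun ω => (X ω).re) μ := hX.re
  have hXi : Integrable (fun ω => (X ω).im) μ := hX.im
  have hYr : Integrable (fun ω => (Y ω).re) μ := hY.re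
  have hYi : Integrable (fun ω => (Y ω).im) μ := hY.im
  have I_rr : (∫ ω, (X ω).re * (Y ω).re ∂μ)
      = (∫ ω, (X ω).re ∂μ) * ∫ ω, (Y ω).re ∂μ := h_rr.integral_fun_mul_eq_mul_integral hXr.1 hYr.1
  have I_ri : (∫ ω, (X ω).re * (Y ω).im ∂μ)
      = (∫ ω, (X ω).re ∂μ) * ∫ ω, (Y ω).im ∂μ := h_ri.integral_fun_mul_eq_mul_integral hXr.1 hYi.1
  have I_ir : (∫ ω, (X ω).im * (Y ω).re ∂μ)
      = (∫ ω, (X ω).im ∂μ) * ∫ ω, (Y ω).re ∂μ := h_ir.integral_fun_mul_eq_mul_integral hXi.1 hYr.1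
  have I_ii : (∫ ω, (X ω).im * (Y ω).im ∂μ)
      = (∫ ω, (X ω).im ∂μ) * ∫ ω, (Y ω).im ∂μ := h_ii.integral_fun_mul_eq_mul_integral hXi.1 hYi.1
  have hint_rr : Integrable (fun ω => (X ω).re * (Y ω).re) μ := h_rr.integrable_mul hXr hYr
  have hint_ri : Integrable (fun ω => (X ω).re * (Y ω).im) μ := h_ri.integrable_mul hXr hYi
  have hint_ir : Integrable (fun ω => (X ω).im * (Y ω).re) μ := h_ir.integrable_mul hXi hYr
  have hint_ii : Integrable (fun ω => (X ω).im * (Y ω).im) μ := h_ii.integrable_mul hXi hYi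
  have eX_r := integral_re hX
  have eX_i := integral_im hX
  have eY_r := integral_re hY
  have eY_i := integral_im hY
  have eXY_r := integral_re hXY
  have eXY_i := integral_im hXY
  simp only [RCLike.re_to_complex, RCLike.im_to_complex] at eX_r eX_i eY_r eY_i eXY_r eXY_i
  apply Complex.ext
  · rw [Complex.mul_re, ← eX_r, ← eX_i, ← eY_r, ← eY_i, ← eXY_r]
    simp only [Complex.mul_re]
    rw [integral_sub hint_rr hint_ii, I_rr, I_ii]
  · rw [Complex.mul_im, ← eX_r, ← eX_i, ← eY_r, ← eY_i, ← eXY_i]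
    simp only [Complex.mul_im]
    rw [integral_add hint_ri hint_ir, I_ri, I_ir]

/-- `iIndepFun` is invariant under almost-everywhere modification. -/
lemma aux_iIndepFun_congr_ae {ι : Type*} {f g : ι → Ω' → ℂ}
    (hfg : ∀ i, f i =ᵐ[μ] g i)
    (hf : iIndepFun f μ) :
    iIndepFun g μ := by
  rw [iIndepFun_iff_measure_inter_preimage_eq_mul] at hf ⊢
  intro S sets hsets
  have hS : ∀ᵐ ω ∂μ, ∀ i ∈ S, f i ω = g i ω :=
    (MeasureTheory.ae_ball_iff S.countable_toSet).2 fun i _ => hfg i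
  have h1 : μ (⋂ i ∈ S, g i ⁻¹' sets i) = μ (⋂ i ∈ S, f i ⁻¹' sets i) := by
    apply measure_congr
    rw [Filter.eventuallyEq_set]
    filter_upwards [hS] with ω hω
    simp only [Set.mem_iInter, Set.mem_preimage]
    exact ⟨fun h i hi => by rw [hω i hi]; exact h i hi,
      fun h i hi => by rw [← hω i hi]; exact h i hi⟩
  rw [h1, hf S hsets]
  refine Finset.prod_congr rfl fun i hi => ?_
  apply measure_congr
  rw [Filter.eventuallyEq_set]
  filter_upwards [hfg i] with ω hω
  simp [Set.mem_preimage, hω]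

/-- Product of two `L²` complex functions is integrable. -/
lemma aux_integrable_mul {f g : Ω' → ℂ} (hf : MemLp f 2 μ) (hg : MemLp g 2 μ) :
    Integrable (fun ω => f ω * g ω) μ := by
  have hpqr : (1 : ℝ≥0∞) / 1 = 1 / 2 + 1 / 2 := by
    rw [ENNReal.div_add_div_same, one_add_one_eq_two,
      ENNReal.div_self two_ne_zero ENNReal.ofNat_ne_top, div_one]
  have h := hg.smul (φ := f) (r := 1) hf
  rw [memLp_one_iff_integrable] at h
  exact h

/-- Conjugation preserves `MemLp`. -/
lemma aux_memℒp_conj {f : Ω' → ℂ} (hf : MemLp f 2 μ) :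
    MemLp (fun ω => (starRingEnd ℂ) (f ω)) 2 μ := by
  refine hf.congr_norm (Continuous.comp_aestronglyMeasurable continuous_star hf.1) ?_
  filter_upwards with ω
  simp

end Aux

/-- Non-LoS term of the ergodic rate decomposition (B-2): for jointly independent,
zero-mean, unit-second-moment, square-integrable complex random variables forming
the random vector `h̃` and random matrix `G̃`, one has `E[‖h̃ᴴ Θ G̃‖²] = M ‖Θ‖²_F`. -/
theorem expectation_norm_sq_vecMul_nlos
    (N M : ℕ) (hN : 0 < N) (hM : 0 < M)
    (Θ : Matrix (Fin N) (Fin N) ℂ)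
    (Ω : Type*) [MeasureSpace Ω] [IsProbabilityMeasure (volume : Measure Ω)]
    (htil : Fin N → Ω → ℂ) (gtil : Fin N → Fin M → Ω → ℂ)
    (hindep : iIndepFun
      (Sum.elim htil (fun p : Fin N × Fin M => gtil p.1 p.2)) volume)
    (hL2h : ∀ n, MemLp (htil n) 2 volume)
    (hL2g : ∀ n m, MemLp (gtil n m) 2 volume)
    (hmeanh : ∀ n, (∫ ω, htil n ω) = 0)
    (hmeang : ∀ n m, (∫ ω, gtil n m ω) = 0)
    (hvarh : ∀ n, (∫ ω, ‖htil n ω‖ ^ 2) = 1)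
    (hvarg : ∀ n m, (∫ ω, ‖gtil n m ω‖ ^ 2) = 1) :
    (∫ ω, ∑ m : Fin M,
        ‖(star (fun n => htil n ω) ᵥ* (Θ * Matrix.of fun n m' => gtil n m' ω)) m‖ ^ 2)
      = M * ∑ i : Fin N, ∑ j : Fin N, ‖Θ i j‖ ^ 2 := by
  classical
  set μ : Measure Ω := volume with hμ
  -- the joint family
  set X : (Fin N ⊕ Fin N × Fin M) → Ω → ℂ :=
    Sum.elim htil (fun p : Fin N × Fin M => gtil p.1 p.2) with hX
  have hL2X : ∀ i, MemLp (X i) 2 μ := by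
    rintro (n | ⟨n, m⟩)
    · exact hL2h n
    · exact hL2g n m
  -- measurable modification
  set Y : (Fin N ⊕ Fin N × Fin M) → Ω → ℂ := fun i => (hL2X i).1.mk (X i) with hY
  have hYm : ∀ i, Measurable (Y i) := fun i => (hL2X i).1.stronglyMeasurable_mk.measurable
  have hae : ∀ i, X i =ᵐ[μ] Y i := fun i => (hL2X i).1.ae_eq_mk
  have hL2Y : ∀ i, MemLp (Y i) 2 μ := fun i => (hL2X i).ae_eq (hae i)
  have hindepY : iIndepFun Y μ := aux_iIndepFun_congr_ae hae hindep
  have hmeanX : ∀ i, (∫ ω, X i ω ∂μ) = 0 := by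
    rintro (n | ⟨n, m⟩)
    · exact hmeanh n
    · exact hmeang n m
  have hvarX : ∀ i, (∫ ω, ‖X i ω‖ ^ 2 ∂μ) = 1 := by
    rintro (n | ⟨n, m⟩)
    · exact hvarh n
    · exact hvarg n m
  have hmeanY : ∀ i, (∫ ω, Y i ω ∂μ) = 0 := fun i => by
    rw [← integral_congr_ae (hae i)]; exact hmeanX i
  have hvarY : ∀ i, (∫ ω, ‖Y i ω‖ ^ 2 ∂μ) = 1 := fun i => by
    have hxy : (fun ω => ‖X i ω‖ ^ 2) =ᵐ[μ] fun ω => ‖Y i ω‖ ^ 2 :=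
      (hae i).mono fun ω hω => by simp only [hω]
    rw [← integral_congr_ae hxy]; exact hvarX i
  -- abbreviations for the modified families
  set h' : Fin N → Ω → ℂ := fun n => Y (Sum.inl n) with hh'
  set g' : Fin N → Fin M → Ω → ℂ := fun n m => Y (Sum.inr (n, m)) with hg'
  -- replace the integrand a.e.
  have hae_all : ∀ᵐ ω ∂μ, ∀ i, X i ω = Y i ω := ae_all_iff.2 fun i => hae i
  have hgoal_ae : (∫ ω, ∑ m : Fin M,
        ‖(star (fun n => htil n ω) ᵥ* (Θ * Matrix.of fun n m' => gtil n m' ω)) m‖ ^ 2 ∂μ)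
      = ∫ ω, ∑ m : Fin M,
        ‖(star (fun n => h' n ω) ᵥ* (Θ * Matrix.of fun n m' => g' n m' ω)) m‖ ^ 2 ∂μ := by
    apply integral_congr_ae
    filter_upwards [hae_all] with ω hω
    have e1 : (fun n => htil n ω) = fun n => h' n ω := funext fun n => hω (Sum.inl n)
    have e2 : (Matrix.of fun n m' => gtil n m' ω) = Matrix.of fun n m' => g' n m' ω := by
      ext n m'
      exact hω (Sum.inr (n, m'))
    rw [e1, e2]
  rw [hgoal_ae]
  -- the expanded entry
  set e : Fin M → Ω → ℂ := fun m ω =>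
    ∑ p : Fin N × Fin N, (starRingEnd ℂ) (h' p.1 ω) * (Θ p.1 p.2 * g' p.2 m ω) with he
  have claim1 : ∀ ω (m : Fin M),
      (star (fun n => h' n ω) ᵥ* (Θ * Matrix.of fun n m' => g' n m' ω)) m = e m ω := by
    intro ω m
    simp only [he, Matrix.vecMul, dotProduct, Matrix.mul_apply, Matrix.of_apply,
      Pi.star_apply, Complex.star_def, Finset.mul_sum, Fintype.sum_prod_type]
  -- the quadruple product terms
  set T : Fin M → (Fin N × Fin N) → (Fin N × Fin N) → Ω → ℂ := fun m p q ω =>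
    (Θ p.1 p.2 * (starRingEnd ℂ) (Θ q.1 q.2)) *
      (((starRingEnd ℂ) (h' p.1 ω) * h' q.1 ω) *
        (g' p.2 m ω * (starRingEnd ℂ) (g' q.2 m ω))) with hT
  have claim2 : ∀ (m : Fin M) ω,
      e m ω * (starRingEnd ℂ) (e m ω) = ∑ p : Fin N × Fin N, ∑ q : Fin N × Fin N, T m p q ω := by
    intro m ω
    simp only [he, hT, map_sum, Finset.sum_mul_sum, _root_.map_mul, Complex.conj_conj]
    refine Finset.sum_congr rfl fun p _ => Finset.sum_congr rfl fun q _ => ?_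
    ring
  -- integrability of the quadruple products
  have hHint : ∀ p q : Fin N × Fin N,
      Integrable (fun ω => (starRingEnd ℂ) (h' p.1 ω) * h' q.1 ω) μ :=
    fun p q => aux_integrable_mul (aux_memℒp_conj (hL2Y _)) (hL2Y _)
  have hGint : ∀ (m : Fin M) (p q : Fin N × Fin N),
      Integrable (fun ω => g' p.2 m ω * (starRingEnd ℂ) (g' q.2 m ω)) μ :=
    fun m p q => aux_integrable_mul (hL2Y _) (aux_memℒp_conj (hL2Y _))
  -- independence of the h-part and the g-part
  have hHGindep : ∀ (m : Fin M) (p q : Fin N × Fin N),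
      IndepFun (fun ω => (starRingEnd ℂ) (h' p.1 ω) * h' q.1 ω)
        (fun ω => g' p.2 m ω * (starRingEnd ℂ) (g' q.2 m ω)) μ := by
    intro m p q
    have base := hindepY.indepFun_prodMk_prodMk hYm
      (Sum.inl p.1) (Sum.inl q.1) (Sum.inr (p.2, m)) (Sum.inr (q.2, m))
      (by simp) (by simp) (by simp) (by simp)
    have mφ : Measurable (fun z : ℂ × ℂ => (starRingEnd ℂ) z.1 * z.2) :=
      ((continuous_star.comp continuous_fst).mul continuous_snd).measurable
    have mψ : Measurable (fun z : ℂ × ℂ => z.1 * (starRingEnd ℂ) z.2) :=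
      (continuous_fst.mul (continuous_star.comp continuous_snd)).measurable
    exact base.comp mφ mψ
  have hTint : ∀ (m : Fin M) (p q : Fin N × Fin N), Integrable (T m p q) μ := by
    intro m p q
    have := ((hHGindep m p q).integrable_mul (hHint p q) (hGint m p q)).const_mul
      (Θ p.1 p.2 * (starRingEnd ℂ) (Θ q.1 q.2))
    exact this
  -- expectations of the pair products
  have EH : ∀ p q : Fin N × Fin N,
      (∫ ω, (starRingEnd ℂ) (h' p.1 ω) * h' q.1 ω ∂μ)
        = if p.1 = q.1 then 1 else 0 := by
    intro p q
    by_cases hpq : p.1 = q.1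
    · rw [if_pos hpq, hpq]
      have : ∀ ω, (starRingEnd ℂ) (h' q.1 ω) * h' q.1 ω = ((‖h' q.1 ω‖ ^ 2 : ℝ) : ℂ) := by
        intro ω
        rw [← Complex.normSq_eq_conj_mul_self]
        congr 1
        rw [Complex.normSq_eq_norm_sq]
      simp_rw [this]
      have hcoe : (∫ ω, ((‖h' q.1 ω‖ ^ 2 : ℝ) : ℂ) ∂μ)
          = ((∫ ω, ‖h' q.1 ω‖ ^ 2 ∂μ : ℝ) : ℂ) := integral_ofReal
      rw [hcoe, hvarY (Sum.inl q.1)]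
      norm_num
    · rw [if_neg hpq]
      have hne : (Sum.inl p.1 : Fin N ⊕ Fin N × Fin M) ≠ Sum.inl q.1 := by
        simpa using hpq
      have hi : IndepFun (fun ω => (starRingEnd ℂ) (h' p.1 ω)) (h' q.1) μ :=
        (hindepY.indepFun hne).comp continuous_star.measurable measurable_id
      rw [aux_indepFun_integral_mul_complex hi
        ((aux_memℒp_conj (hL2Y _)).integrable one_le_two)
        ((hL2Y _).integrable one_le_two)]
      rw [integral_conj, hmeanY (Sum.inl p.1), hmeanY (Sum.inl q.1)]
      simp
  have EG : ∀ (m : Fin M) (p q : Fin N × Fin N),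
      (∫ ω, g' p.2 m ω * (starRingEnd ℂ) (g' q.2 m ω) ∂μ)
        = if p.2 = q.2 then 1 else 0 := by
    intro m p q
    by_cases hpq : p.2 = q.2
    · rw [if_pos hpq, hpq]
      have : ∀ ω, g' q.2 m ω * (starRingEnd ℂ) (g' q.2 m ω) = ((‖g' q.2 m ω‖ ^ 2 : ℝ) : ℂ) := by
        intro ω
        rw [Complex.mul_conj]
        congr 1
        rw [Complex.normSq_eq_norm_sq]
      simp_rw [this]
      have hcoe : (∫ ω, ((‖g' q.2 m ω‖ ^ 2 : ℝ) : ℂ) ∂μ)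
          = ((∫ ω, ‖g' q.2 m ω‖ ^ 2 ∂μ : ℝ) : ℂ) := integral_ofReal
      rw [hcoe, hvarY (Sum.inr (q.2, m))]
      norm_num
    · rw [if_neg hpq]
      have hne : (Sum.inr (p.2, m) : Fin N ⊕ Fin N × Fin M) ≠ Sum.inr (q.2, m) := by
        simp [Prod.ext_iff, hpq]
      have hi : IndepFun (g' p.2 m) (fun ω => (starRingEnd ℂ) (g' q.2 m ω)) μ :=
        (hindepY.indepFun hne).comp measurable_id continuous_star.measurable
      rw [aux_indepFun_integral_mul_complex hi
        ((hL2Y _).integrable one_le_two)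
        ((aux_memℒp_conj (hL2Y _)).integrable one_le_two)]
      rw [integral_conj, hmeanY (Sum.inr (p.2, m)), hmeanY (Sum.inr (q.2, m))]
      simp
  have ET : ∀ (m : Fin M) (p q : Fin N × Fin N),
      (∫ ω, T m p q ω ∂μ)
        = (Θ p.1 p.2 * (starRingEnd ℂ) (Θ q.1 q.2)) *
            ((if p.1 = q.1 then 1 else 0) * (if p.2 = q.2 then 1 else 0)) := by
    intro m p q
    rw [hT]
    rw [integral_const_mul]
    rw [aux_indepFun_integral_mul_complex (hHGindep m p q) (hHint p q) (hGint m p q)]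
    rw [EH p q, EG m p q]
  -- value of the complex second moment of each entry
  set S : ℝ := ∑ i : Fin N, ∑ j : Fin N, ‖Θ i j‖ ^ 2 with hS
  have key : ∀ m : Fin M, (∫ ω, e m ω * (starRingEnd ℂ) (e m ω) ∂μ) = (S : ℂ) := by
    intro m
    have h2 : (fun ω => e m ω * (starRingEnd ℂ) (e m ω))
        = fun ω => ∑ p : Fin N × Fin N, ∑ q : Fin N × Fin N, T m p q ω :=
      funext fun ω => claim2 m ω
    rw [h2]
    rw [integral_finset_sum _ fun p _ => integrable_finset_sum _ fun q _ => hTint m p q]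
    have h3 : ∀ p ∈ (Finset.univ : Finset (Fin N × Fin N)),
        (∫ ω, ∑ q : Fin N × Fin N, T m p q ω ∂μ)
          = ∑ q : Fin N × Fin N, ∫ ω, T m p q ω ∂μ :=
      fun p _ => integral_finset_sum _ fun q _ => hTint m p q
    rw [Finset.sum_congr rfl h3]
    have h4 : ∀ p q : Fin N × Fin N,
        (∫ ω, T m p q ω ∂μ)
          = if q = p then Θ p.1 p.2 * (starRingEnd ℂ) (Θ p.1 p.2) else 0 := by
      intro p q
      rw [ET m p q]
      by_cases hqp : q = p
      · subst hqp; simp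
      · have : ¬(p.1 = q.1 ∧ p.2 = q.2) := fun h => hqp (Prod.ext h.1.symm h.2.symm)
        rcases not_and_or.1 this with h | h
        · simp [h, hqp]
        · simp [h, hqp]
    simp_rw [h4]
    simp only [Finset.sum_ite_eq, Finset.sum_ite_eq', Finset.mem_univ, if_true]
    have h5 : ∀ p : Fin N × Fin N,
        Θ p.1 p.2 * (starRingEnd ℂ) (Θ p.1 p.2) = ((‖Θ p.1 p.2‖ ^ 2 : ℝ) : ℂ) := by
      intro p
      rw [Complex.mul_conj]
      congr 1
      rw [Complex.normSq_eq_norm_sq]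
    simp_rw [h5]
    rw [hS]
    push_cast
    exact Fintype.sum_prod_type _
  -- from the complex second moment to the real one
  have hnormsq : ∀ z : ℂ, ‖z‖ ^ 2 = (z * (starRingEnd ℂ) z).re := by
    intro z
    rw [Complex.mul_conj]
    rw [Complex.ofReal_re, Complex.normSq_eq_norm_sq]
  have hint_ecc : ∀ m : Fin M, Integrable (fun ω => e m ω * (starRingEnd ℂ) (e m ω)) μ := by
    intro m
    have h2 : (fun ω => e m ω * (starRingEnd ℂ) (e m ω))
        = fun ω => ∑ p : Fin N × Fin N, ∑ q : Fin N × Fin N, T m p q ω :=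
      funext fun ω => claim2 m ω
    rw [h2]
    exact integrable_finset_sum _ fun p _ => integrable_finset_sum _ fun q _ => hTint m p q
  have keyR : ∀ m : Fin M, (∫ ω, ‖e m ω‖ ^ 2 ∂μ) = S := by
    intro m
    have := integral_re (hint_ecc m)
    simp only [RCLike.re_to_complex] at this
    calc (∫ ω, ‖e m ω‖ ^ 2 ∂μ) = ∫ ω, (e m ω * (starRingEnd ℂ) (e m ω)).re ∂μ := by
          simp_rw [hnormsq]
      _ = (∫ ω, e m ω * (starRingEnd ℂ) (e m ω) ∂μ).re := this
      _ = (S : ℂ).re := by rw [key m]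
      _ = S := Complex.ofReal_re S
  have hint_normsq : ∀ m : Fin M, Integrable (fun ω => ‖e m ω‖ ^ 2) μ := by
    intro m
    have := (hint_ecc m).re
    simp only [RCLike.re_to_complex] at this
    exact this.congr (Filter.Eventually.of_forall fun ω => (hnormsq (e m ω)).symm)
  calc (∫ ω, ∑ m : Fin M,
        ‖(star (fun n => h' n ω) ᵥ* (Θ * Matrix.of fun n m' => g' n m' ω)) m‖ ^ 2 ∂μ)
      = ∫ ω, ∑ m : Fin M, ‖e m ω‖ ^ 2 ∂μ := by
        apply integral_congr_ae
        filter_upwards with ω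
        exact Finset.sum_congr rfl fun m _ => by rw [claim1 ω m]
    _ = ∑ m : Fin M, ∫ ω, ‖e m ω‖ ^ 2 ∂μ :=
        integral_finset_sum _ fun m _ => hint_normsq m
    _ = ∑ m : Fin M, S := Finset.sum_congr rfl fun m _ => keyR m
    _ = M * S := by
        rw [Finset.sum_const, Finset.card_univ, Fintype.card_fin, nsmul_eq_mul]
end
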